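/- arXiv:1908.06428 — 2 statements merged into one kernel-verified Lean document; each statement's English description precedes it below -/
import Mathlib

section
/- Every SLP producing a binary De Bruijn sequence of order n has size at least c·2ⁿ/n for some absolute constant c > 0. -/
/-- A straight-line program over alphabet `α`, in topologically-sorted form:
nonterminals are `Fin n`, each has exactly one nonempty right-hand side, and
right-hand sides only refer to strictly smaller nonterminals (acyclicity). -/
structure SLP (α : Type) where
  n : ℕ
  rhs : Fin n → List (α ⊕ Fin n)
  rhs_ne : ∀ i, rhs i ≠ []
  acyc : ∀ i j, Sum.inr j ∈ rhs i → (j : ℕ) < (i : ℕ)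
  start : Fin n

namespace SLP

variable {α : Type}

/-- The word produced by nonterminal `i`. -/
def valAux (G : SLP α) (i : Fin G.n) : List α :=
  (G.rhs i).attach.flatMap (fun s =>
    match s with
    | ⟨Sum.inl a, _⟩ => [a]
    | ⟨Sum.inr j, hj⟩ => G.valAux j)
termination_by (i : ℕ)
decreasing_by exact G.acyc i j hj

/-- The word produced by the SLP. -/
def val (G : SLP α) : List α := G.valAux G.start

/-- The size of the SLP: sum of lengths of all right-hand sides. -/
def size (G : SLP α) : ℕ := ∑ i : Fin G.n, (G.rhs i).length

end SLP

/-- `g w`: the minimal size of an SLP producing `w`. -/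
noncomputable def g {α : Type} (w : List α) : ℕ :=
  sInf { s | ∃ G : SLP α, G.size = s ∧ G.val = w }

/-- `OccursWithoutOverlap v w m` : `v` has (at least) `m` pairwise
non-overlapping occurrences in `w`, witnessed by a decomposition
`w = g₀ v g₁ v ⋯ v gₘ`. -/
def OccursWithoutOverlap {α : Type} (v w : List α) (m : ℕ) : Prop :=
  ∃ gs : List (List α), gs.length = m + 1 ∧ w = List.intercalate v gs

/-- `IsDeBruijn n B` : `B` is a binary De Bruijn sequence of order `n`: it has length
`2^n` and every binary word of length `n` occurs exactly once as a factor of the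
cyclic word `B`, i.e. as a factor of `B ++ B.take (n-1)` starting at a position `< 2^n`. -/
def IsDeBruijn (n : ℕ) (B : List Bool) : Prop :=
  B.length = 2 ^ n ∧
  ∀ v : List Bool, v.length = n →
    ∃! i : ℕ, i < 2 ^ n ∧ ((B ++ B.take (n - 1)).drop i).take n = v

namespace SLPAux

def S {α : Type} (L : List (List α)) (t : ℕ) : ℕ := ((L.take t).map List.length).sum

lemma S_succ {α : Type} (L : List (List α)) (t : ℕ) (ht : t < L.length) :
    S L (t+1) = S L t + L[t].length := by
  unfold S
  rw [List.map_take, List.map_take, List.sum_take_succ _ _ (by simpa using ht)]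
  simp

lemma exists_seg {α : Type} (L : List (List α)) (p k : ℕ) (hk : 1 ≤ k)
    (h : p + k ≤ L.flatten.length) :
    ∃ t, ∃ _ : t < L.length, S L t ≤ p ∧ p < S L (t+1) := by
  induction L generalizing p with
  | nil => simp at h; omega
  | cons x L ih =>
    by_cases hp : p < x.length
    · exact ⟨0, by simp, by simp [S], by simpa [S, S_succ] using by simpa [S] using by omega⟩
    · push_neg at hp
      have h' : (p - x.length) + k ≤ L.flatten.length := by
        simp only [List.flatten_cons, List.length_append] at h; omega
      obtain ⟨t, ht, h1, h2⟩ := ih (p - x.length) h'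
      refine ⟨t + 1, by simpa using Nat.succ_lt_succ ht, ?_, ?_⟩
      · simp only [S, List.take_succ_cons, List.map_cons, List.sum_cons]
        unfold S at h1; omega
      · simp only [S, List.take_succ_cons, List.map_cons, List.sum_cons]
        unfold S at h2; omega

lemma drop_take_seg {α : Type} (L : List (List α)) (t : ℕ) (ht : t < L.length) (p k : ℕ)
    (h1 : S L t ≤ p) (h2 : p + k ≤ S L t + L[t].length) :
    (L.flatten.drop p).take k = (L[t].drop (p - S L t)).take k := by
  conv_lhs => rw [← List.take_append_drop t L, List.flatten_append]
  have hlen : (List.take t L).flatten.length = S L t := by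
    simp [List.length_flatten, S]
  rw [List.drop_append]
  rw [hlen]
  have : (List.take t L).flatten.drop p = [] := by
    apply List.drop_eq_nil_of_le; omega
  rw [this, List.nil_append]
  rw [← List.getElem_cons_drop (as := L) (i := t) ht, List.flatten_cons]
  rw [List.drop_append_of_le_length (by omega)]
  rw [List.take_append_of_le_length (by simp; omega)]

end SLPAux

namespace SLP
open SLPAux

variable {α : Type}

def E (G : SLP α) : (α ⊕ Fin G.n) → List α
  | Sum.inl a => [a]
  | Sum.inr j => G.valAux j

lemma valAux_eq (G : SLP α) (i : Fin G.n) :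
    G.valAux i = ((G.rhs i).map G.E).flatten := by
  have h1 : G.valAux i = (G.rhs i).attach.flatMap (fun s => G.E s.1) := by
    rw [valAux]
    congr 1
    funext s
    obtain ⟨s | s, h⟩ := s <;> rfl
  rw [h1, List.flatMap_subtype (g := G.E) (hf := fun x h => rfl),
    List.unattach_attach, List.flatMap_def]

lemma key (G : SLP α) : ∀ N (i : Fin G.n), (i : ℕ) < N → ∀ (k p : ℕ), 1 ≤ k →
    p + k ≤ (G.valAux i).length →
    ∃ (j : Fin G.n) (t : ℕ) (ht : t < (G.rhs j).length) (off : ℕ), off < k ∧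
      ((G.valAux j).drop (S ((G.rhs j).map G.E) (t+1) - (off+1))).take k
        = ((G.valAux i).drop p).take k := by
  intro N
  induction N with
  | zero => intro i hi; omega
  | succ N ih =>
    intro i hi k p hk h
    set L := (G.rhs i).map G.E with hL
    have hval : G.valAux i = L.flatten := G.valAux_eq i
    obtain ⟨t, ht, h1, h2⟩ := exists_seg L p k hk (by rw [← hval]; exact h)
    have htr : t < (G.rhs i).length := by simpa [hL] using ht
    have hgt : L[t] = G.E (G.rhs i)[t] := by simp [hL]
    have hS : S L (t+1) = S L t + L[t].length := S_succ L t ht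
    by_cases hA : p + k ≤ S L (t+1)
    · have hex : ((G.valAux i).drop p).take k = (L[t].drop (p - S L t)).take k := by
        rw [hval]; exact drop_take_seg L t ht p k h1 (by omega)
      cases hs : (G.rhs i)[t] with
      | inl a =>
        have hlen : L[t].length = 1 := by rw [hgt, hs]; rfl
        have hp : p = S L t ∧ k = 1 := by omega
        refine ⟨i, t, htr, 0, hk, ?_⟩
        rw [← hL]
        have : S L (t+1) - 1 = p := by omega
        rw [this]
      | inr j =>
        have hjmem : Sum.inr j ∈ G.rhs i := hs ▸ List.getElem_mem htr
        have hji : (j : ℕ) < (i : ℕ) := G.acyc i j hjmem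
        have hvj : L[t] = G.valAux j := by rw [hgt, hs]; rfl
        have hb : (p - S L t) + k ≤ (G.valAux j).length := by rw [← hvj]; omega
        obtain ⟨j', t', ht', off, hoff, heq⟩ := ih j (by omega) k (p - S L t) hk hb
        exact ⟨j', t', ht', off, hoff, heq.trans (by rw [← hvj]; exact hex.symm)⟩
    · refine ⟨i, t, htr, S L (t+1) - p - 1, by omega, ?_⟩
      rw [← hL]
      have : S L (t+1) - (S L (t+1) - p - 1 + 1) = p := by omega
      rw [this]

lemma factor_count (G : SLP α) (k : ℕ) (hk : 1 ≤ k) (F : Finset (List α))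
    (hF : ∀ v ∈ F, ∃ p, p + k ≤ G.val.length ∧ (G.val.drop p).take k = v) :
    F.card ≤ G.size * k := by
  classical
  let dec : ((Σ j : Fin G.n, Fin (G.rhs j).length) × Fin k) → List α :=
    fun x => ((G.valAux x.1.1).drop (S ((G.rhs x.1.1).map G.E) ((x.1.2 : ℕ) + 1) - ((x.2 : ℕ) + 1))).take k
  have hsub : F ⊆ Finset.image dec Finset.univ := by
    intro v hv
    obtain ⟨p, hp, hpv⟩ := hF v hv
    obtain ⟨j, t, ht, off, hoff, heq⟩ := G.key G.n G.start G.start.isLt k p hk hp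
    rw [Finset.mem_image]
    exact ⟨⟨⟨j, ⟨t, ht⟩⟩, ⟨off, hoff⟩⟩, Finset.mem_univ _, by
      simpa [dec] using heq.trans hpv⟩
  calc F.card ≤ (Finset.image dec Finset.univ).card := Finset.card_le_card hsub
    _ ≤ (Finset.univ : Finset ((Σ j : Fin G.n, Fin (G.rhs j).length) × Fin k)).card :=
        Finset.card_image_le
    _ = Fintype.card ((Σ j : Fin G.n, Fin (G.rhs j).length) × Fin k) := Finset.card_univ
    _ = G.size * k := by
        simp [Fintype.card_sigma, size]

end SLP


/-- Every SLP producing a binary De Bruijn sequence of order `n` has size at least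
`c·2ⁿ/n` for an absolute constant `c > 0`. -/
theorem deBruijn_slp_lower_bound :
    ∃ c : ℝ, 0 < c ∧ ∀ (n : ℕ) (B : List Bool), 1 ≤ n → IsDeBruijn n B →
      ∀ G : SLP Bool, G.val = B → c * 2 ^ n / n ≤ (G.size : ℝ) := by
  classical
  refine ⟨1/2, by norm_num, ?_⟩
  intro n B hn hB G hG
  obtain ⟨hlen, huniq⟩ := hB
  have hn2 : n < 2^n := Nat.lt_two_pow_self
  have hWB : ∀ i, i + n ≤ 2^n → (((B ++ B.take (n-1)).drop i).take n) = (B.drop i).take n := by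
    intro i hi
    rw [List.drop_append_of_le_length (by omega),
      List.take_append_of_le_length (by simp [hlen]; omega)]
  set f : ℕ → List Bool := fun i => (B.drop i).take n with hf
  have hflen : ∀ i, i + n ≤ 2^n → (f i).length = n := by
    intro i hi; simp [hf, hlen]; omega
  have hinj : Set.InjOn f (Finset.range (2^n - n + 1)) := by
    intro i₁ h₁ i₂ h₂ he
    simp only [Finset.coe_range, Set.mem_Iio] at h₁ h₂
    have hi₁ : i₁ + n ≤ 2^n := by omega
    have hi₂ : i₂ + n ≤ 2^n := by omega
    obtain ⟨w, hw, hu⟩ := huniq (f i₁) (hflen i₁ hi₁)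
    have e1 := hu i₁ ⟨by omega, by rw [hWB i₁ hi₁]⟩
    have e2 := hu i₂ ⟨by omega, by rw [hWB i₂ hi₂]; exact he.symm⟩
    omega
  set F := (Finset.range (2^n - n + 1)).image f with hFdef
  have hcard : F.card = 2^n - n + 1 := by
    rw [hFdef, Finset.card_image_of_injOn hinj, Finset.card_range]
  have hcount : F.card ≤ G.size * n := by
    apply G.factor_count n hn
    intro v hv
    simp only [hFdef, Finset.mem_image, Finset.mem_range] at hv
    obtain ⟨i, hi, rfl⟩ := hv
    exact ⟨i, by rw [hG, hlen]; omega, by rw [hG]⟩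
  have h2 : 2^n = 2 * 2^(n-1) := by
    conv_lhs => rw [show n = (n-1)+1 by omega]
    ring
  have h3 : n - 1 < 2^(n-1) := Nat.lt_two_pow_self
  have hpow : 2^(n-1) ≤ G.size * n := by omega
  have hnR : (0:ℝ) < n := by exact_mod_cast Nat.pos_of_ne_zero (by omega)
  rw [div_le_iff₀ hnR]
  have h2R : (2:ℝ)^n = 2 * 2^(n-1) := by exact_mod_cast h2
  have hpR : ((2:ℝ))^(n-1) ≤ (G.size : ℝ) * n := by exact_mod_cast hpow
  rw [h2R]; linarith
end

section
/- Let Σ = {c₀,…,c_{k-1}} and φ: Σ^* → {a,b}^* the homomorphism with φ(c_i) = a^i b. If w ∈ Σ^* contains every symbol of Σ, then from any SLP A producing w one obtains an SLP producing φ(w) of size at most 3·|A|; in particular g(φ(w)) ≤ 3·g(w). -/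
/-- The binary encoding `φ : {c₀,…,c_{k-1}}^* → {a,b}^*`, `φ(c_i) = aⁱb`,
where `a := true` and `b := false`. -/
def phi {k : ℕ} (w : List (Fin k)) : List Bool :=
  (w.map (fun c => List.replicate (c : ℕ) true ++ [false])).flatten

/- ## Auxiliary lemmas -/

def SLP.sym {α : Type} (G : SLP α) : α ⊕ Fin G.n → List α
  | .inl a => [a]
  | .inr j => G.valAux j

lemma attach_bind' {β γ : Type} (l : List β) (f : β → List γ) :
    l.attach.flatMap (fun s => f s.1) = l.flatMap f := by
  induction l with
  | nil => rfl
  | cons a t ih =>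
    simp only [List.attach_cons, List.flatMap_cons, List.flatMap_map]
    simpa using congrArg (f a ++ ·) ih

lemma SLP.valAux_eq_s13 {α : Type} (G : SLP α) (i : Fin G.n) :
    G.valAux i = (G.rhs i).flatMap G.sym := by
  rw [SLP.valAux]
  have h1 : (fun s : {x // x ∈ G.rhs i} =>
      match s with
      | ⟨Sum.inl a, _⟩ => [a]
      | ⟨Sum.inr j, _⟩ => G.valAux j) = fun s => G.sym s.1 := by
    funext s; rcases s with ⟨s | s, hs⟩ <;> rfl
  show (G.rhs i).attach.flatMap _ = _
  rw [h1, attach_bind']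

lemma phi_append {k : ℕ} (x y : List (Fin k)) : phi (x ++ y) = phi x ++ phi y := by
  simp [phi]

lemma phi_single {k : ℕ} (c : Fin k) :
    phi [c] = List.replicate (c : ℕ) true ++ [false] := by
  simp [phi]

lemma flatMap_congr' {β γ : Type} (l : List β) (f g : β → List γ)
    (h : ∀ x ∈ l, f x = g x) : l.flatMap f = l.flatMap g := by
  induction l with
  | nil => rfl
  | cons a t ih =>
    simp only [List.flatMap_cons]
    rw [h a (by simp), ih (fun x hx => h x (by simp [hx]))]

lemma phi_flatMap {k : ℕ} {β : Type} (l : List β) (f : β → List (Fin k)) :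
    phi (l.flatMap f) = l.flatMap (fun s => phi (f s)) := by
  induction l with
  | nil => rfl
  | cons a t ih =>
    simp only [List.flatMap_cons]
    rw [phi_append, ih]

/- ## The encoding SLP -/

def encSym (k nA : ℕ) : (Fin k ⊕ Fin nA) → (Bool ⊕ Fin (k + nA))
  | Sum.inl c => Sum.inr ⟨(c : ℕ), by have := c.isLt; omega⟩
  | Sum.inr j => Sum.inr ⟨k + (j : ℕ), by have := j.isLt; omega⟩

def enc (k : ℕ) (A : SLP (Fin k)) : SLP Bool where
  n := k + A.n
  rhs i :=
    if h : (i : ℕ) < k then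
      if (i : ℕ) = 0 then [Sum.inl false]
      else [Sum.inl true, Sum.inr ⟨(i : ℕ) - 1, by have := i.isLt; omega⟩]
    else (A.rhs ⟨(i : ℕ) - k, by have := i.isLt; omega⟩).map (encSym k A.n)
  rhs_ne i := by
    split_ifs with h h0
    · simp
    · simp
    · simp [A.rhs_ne]
  acyc i j hj := by
    by_cases h : (i : ℕ) < k
    · rw [dif_pos h] at hj
      by_cases h0 : (i : ℕ) = 0
      · rw [if_pos h0] at hj; simp at hj
      · rw [if_neg h0] at hj
        simp only [List.mem_cons, List.mem_singleton] at hj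
        rcases hj with hj | hj | hj
        · exact absurd hj (by simp)
        · have : j = ⟨(i : ℕ) - 1, by have := i.isLt; omega⟩ := Sum.inr.inj hj
          subst this; simp; omega
        · simp at hj
    · rw [dif_neg h] at hj
      simp only [List.mem_map] at hj
      obtain ⟨s, hs, hfs⟩ := hj
      rcases s with c | j'
      · simp only [encSym, Sum.inr.injEq] at hfs
        subst hfs
        have := c.isLt; simp; omega
      · have hlt := A.acyc _ _ hs
        simp only [encSym, Sum.inr.injEq] at hfs
        subst hfs
        simp at hlt ⊢; omega
  start := ⟨k + (A.start : ℕ), by have := A.start.isLt; omega⟩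

lemma enc_rhs (k : ℕ) (A : SLP (Fin k)) (i : Fin (enc k A).n) :
    (enc k A).rhs i =
      if h : (i : ℕ) < k then
        (if (i : ℕ) = 0 then [Sum.inl false]
         else [Sum.inl true,
           Sum.inr (⟨(i : ℕ) - 1, by have : (i : ℕ) < k + A.n := i.isLt; omega⟩ :
             Fin (enc k A).n)])
      else (A.rhs ⟨(i : ℕ) - k,
          by have : (i : ℕ) < k + A.n := i.isLt; omega⟩).map (encSym k A.n) := rfl

lemma enc_low (k : ℕ) (A : SLP (Fin k)) :
    ∀ (c : ℕ) (hck : c < k) (hc : c < (enc k A).n),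
      (enc k A).valAux ⟨c, hc⟩ = List.replicate c true ++ [false] := by
  intro c
  induction c with
  | zero =>
    intro hck hc
    rw [SLP.valAux_eq_s13, enc_rhs]
    rw [dif_pos hck, if_pos rfl]
    simp [SLP.sym]
  | succ c ih =>
    intro hck hc
    rw [SLP.valAux_eq_s13, enc_rhs]
    rw [dif_pos hck, if_neg (by simp)]
    have hc' : c < (enc k A).n := by
      have : (c + 1 : ℕ) < k + A.n := hc; show c < k + A.n; omega
    have hidx : (⟨(⟨c + 1, hc⟩ : Fin (enc k A).n) - 1,
        by have : (c + 1 : ℕ) < k + A.n := hc; omega⟩ : Fin (enc k A).n) = ⟨c, hc'⟩ := by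
      apply Fin.ext; simp
    simp only [List.flatMap_cons, List.flatMap_nil, SLP.sym]
    rw [hidx, ih (by omega) hc']
    simp [List.replicate_succ]

lemma enc_high (k : ℕ) (A : SLP (Fin k)) :
    ∀ (m : ℕ) (i : Fin A.n), (i : ℕ) = m →
      (enc k A).valAux
        ⟨k + (i : ℕ), show k + (i : ℕ) < k + A.n from by have := i.isLt; omega⟩ =
      phi (A.valAux i) := by
  intro m
  induction m using Nat.strong_induction_on with
  | _ m IH =>
    intro i him
    rw [SLP.valAux_eq_s13, SLP.valAux_eq_s13 A, phi_flatMap, enc_rhs]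
    rw [dif_neg (by simp)]
    have hidx : (⟨k + (i : ℕ) - k,
        by have h := i.isLt; omega⟩ : Fin A.n) = i := by
      apply Fin.ext; simp
    rw [hidx]; erw [List.flatMap_map]
    refine flatMap_congr' _ _ _ ?_
    intro s hs
    rcases s with c | j
    · show (enc k A).valAux ⟨(c : ℕ), _⟩ = phi (A.sym (Sum.inl c))
      erw [enc_low k A (c : ℕ) c.isLt]
      show _ = phi [c]
      rw [phi_single]
    · show (enc k A).valAux ⟨k + (j : ℕ), _⟩ = phi (A.sym (Sum.inr j))
      have hlt : (j : ℕ) < m := him ▸ A.acyc i j hs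
      exact IH (j : ℕ) hlt j rfl

/-- If every letter of `Σ = {c₀,…,c_{k-1}}` occurs in `w`, then from any SLP `A` for `w`
one obtains an SLP for `φ(w)` of size at most `3·|A|`; in particular `g(φ(w)) ≤ 3·g(w)`. -/
theorem slp_encode (k : ℕ) (hk : 1 ≤ k) (w : List (Fin k)) (hall : ∀ c : Fin k, c ∈ w) :
    (∀ A : SLP (Fin k), A.val = w →
      ∃ B : SLP Bool, B.val = phi w ∧ B.size ≤ 3 * A.size) ∧
    g (phi w) ≤ 3 * g w := by
  have main : ∀ A : SLP (Fin k), A.val = w →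
      ∃ B : SLP Bool, B.val = phi w ∧ B.size ≤ 3 * A.size := by
    intro A hA
    refine ⟨enc k A, ?_, ?_⟩
    · have h1 := enc_high k A (A.start : ℕ) A.start rfl
      have h2 : phi (A.valAux A.start) = phi w := by
        rw [show A.valAux A.start = A.val from rfl, hA]
      exact h1.trans h2
    · have hksize : k ≤ A.size := by
        have hterm : ∀ (m : ℕ) (i : Fin A.n) (c : Fin k), (i : ℕ) = m →
            c ∈ A.valAux i → ∃ j, Sum.inl c ∈ A.rhs j := by
          intro m
          induction m using Nat.strong_induction_on with
          | _ m IH =>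
            intro i c him hc
            rw [SLP.valAux_eq_s13, List.mem_flatMap] at hc
            obtain ⟨s, hs, hcs⟩ := hc
            rcases s with a | j
            · simp only [SLP.sym, List.mem_singleton] at hcs
              exact ⟨i, hcs ▸ hs⟩
            · exact IH (j : ℕ) (him ▸ A.acyc i j hs) j c rfl hcs
        have hsub : (Finset.univ.image (Sum.inl : Fin k → Fin k ⊕ Fin A.n)) ⊆
            Finset.univ.biUnion (fun i => (A.rhs i).toFinset) := by
          intro x hx
          simp only [Finset.mem_image, Finset.mem_univ, true_and] at hx
          obtain ⟨c, hc⟩ := hx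
          obtain ⟨j, hj⟩ := hterm (A.start : ℕ) A.start c rfl (by
            rw [show A.valAux A.start = A.val from rfl, hA]; exact hall c)
          simp only [Finset.mem_biUnion, Finset.mem_univ, true_and, List.mem_toFinset]
          exact ⟨j, hc ▸ hj⟩
        calc k = (Finset.univ.image (Sum.inl : Fin k → Fin k ⊕ Fin A.n)).card := by
                rw [Finset.card_image_of_injective _ Sum.inl_injective,
                  Finset.card_univ, Fintype.card_fin]
          _ ≤ (Finset.univ.biUnion (fun i => (A.rhs i).toFinset)).card :=
                Finset.card_le_card hsub
          _ ≤ ∑ i, (A.rhs i).toFinset.card := Finset.card_biUnion_le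
          _ ≤ ∑ i, (A.rhs i).length :=
                Finset.sum_le_sum fun i _ => List.toFinset_card_le _
          _ = A.size := rfl
      have hsize : (enc k A).size ≤ 2 * k + A.size := by
        show (∑ i : Fin (k + A.n), ((enc k A).rhs i).length) ≤ 2 * k + A.size
        rw [Fin.sum_univ_add]
        have h1 : ∑ i : Fin k,
            ((enc k A).rhs (Fin.castAdd A.n i : Fin (k + A.n))).length ≤ 2 * k := by
          calc ∑ i : Fin k, ((enc k A).rhs (Fin.castAdd A.n i : Fin (k + A.n))).length
              ≤ ∑ _i : Fin k, 2 := by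
                refine Finset.sum_le_sum fun i _ => ?_
                rw [enc_rhs k A (Fin.castAdd A.n i), dif_pos (by simpa using i.isLt)]
                split_ifs <;> simp
            _ = 2 * k := by simp [mul_comm]
        have h2 : ∑ i : Fin A.n,
            ((enc k A).rhs (Fin.natAdd k i : Fin (k + A.n))).length = A.size := by
          refine Finset.sum_congr rfl fun i _ => ?_
          rw [enc_rhs k A (Fin.natAdd k i), dif_neg (by simp)]
          erw [List.length_map]
          exact congrArg List.length (congrArg A.rhs (Fin.ext (by simp)))
        omega
      omega
  refine ⟨main, ?_⟩
  have hw_ne : w ≠ [] := List.ne_nil_of_mem (hall ⟨0, hk⟩)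
  let T : SLP (Fin k) :=
    { n := 1
      rhs := fun _ => w.map Sum.inl
      rhs_ne := fun _ => by simp [hw_ne]
      acyc := fun i j hj => by
        exfalso
        simp only [List.mem_map] at hj
        obtain ⟨a, _, ha⟩ := hj
        exact Sum.inl_ne_inr ha
      start := 0 }
  have hT : T.val = w := by
    show T.valAux 0 = w
    rw [SLP.valAux_eq_s13]
    show (w.map Sum.inl).flatMap T.sym = w
    rw [List.flatMap_map]
    exact List.flatMap_singleton' w
  have hne : { s | ∃ G : SLP (Fin k), G.size = s ∧ G.val = w }.Nonempty :=
    ⟨T.size, T, rfl, hT⟩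
  obtain ⟨A, hAsize, hAval⟩ := Nat.sInf_mem hne
  obtain ⟨B, hBval, hBsize⟩ := main A hAval
  have h1 : g (phi w) ≤ B.size := Nat.sInf_le ⟨B, rfl, hBval⟩
  have hgw : A.size = g w := hAsize
  omega
end
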